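/- Let D be a squarefree positive integer with D ∉ {2, 3}, and let R_D be the ring of integers of Q(i√D). Then the set of elements a ∈ R_D \ {1} of the form a = (c² − 2c + 9)/(4c) for some c ∈ R_D whose norm divides 81 is exactly {−3, −2, 2}. -/

import Mathlib

open Polynomial

/-- The generator of the ring of integers of `ℚ(i√D)`. -/
noncomputable def alphaD (D : ℕ) : ℂ :=
  if D % 4 = 3 then (1 + Complex.I * Real.sqrt D) / 2 else Complex.I * Real.sqrt D

/-- The ring of integers `R_D = ℤ[α_D]` of `ℚ(i√D)`, viewed as a subset of `ℂ`. -/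
noncomputable def RD (D : ℕ) : Set ℂ :=
  {z | ∃ x y : ℤ, z = (x : ℂ) + (y : ℂ) * alphaD D}

private lemma lemA (D n x y u v : ℤ) (hD1 : 1 ≤ D) (hD2 : D ≠ 2) (hD8 : D ≠ 8)
    (hn : n ∣ 81) (hnpos : 0 < n)
    (e1 : n * (4*u + 2) = (n + 9) * x) (e2 : 4 * n * v = (n - 9) * y)
    (e3 : x*x + D*(y*y) = n) :
    v = 0 ∧ (u = 2 ∨ u = -3 ∨ u = -2 ∨ u = 1) := by
  have hn81 : n ≤ 81 := Int.le_of_dvd (by norm_num) hn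
  have hn5 : n = 1 ∨ n = 3 ∨ n = 9 ∨ n = 27 ∨ n = 81 := by
    interval_cases n <;> omega
  rcases hn5 with rfl | rfl | rfl | rfl | rfl
  · -- n = 1
    have hx1 : 1 ≤ x ∨ x ≤ -1 := by omega
    have hxx : 1 ≤ x * x := by rcases hx1 with h | h <;> nlinarith
    have hyy0 : y * y ≤ 0 := by
      nlinarith [mul_nonneg (by linarith : (0:ℤ) ≤ D - 1) (mul_self_nonneg y)]
    have hy : y = 0 := mul_self_eq_zero.mp (le_antisymm hyy0 (mul_self_nonneg y))
    subst hy
    have hxx1 : x * x = 1 := by linarith [e3, mul_self_nonneg x]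
    have hxb1 : -1 ≤ x := by nlinarith
    have hxb2 : x ≤ 1 := by nlinarith
    interval_cases x <;> omega
  · -- n = 3
    exfalso; omega
  · -- n = 9
    have hyy : y * y ≤ 9 := by
      nlinarith [mul_self_nonneg x, mul_nonneg (by linarith : (0:ℤ) ≤ D - 1) (mul_self_nonneg y)]
    have hxx : x * x ≤ 9 := by
      nlinarith [mul_nonneg (by linarith : (0:ℤ) ≤ D) (mul_self_nonneg y)]
    have hyb1 : -3 ≤ y := by nlinarith
    have hyb2 : y ≤ 3 := by nlinarith
    have hxb1 : -3 ≤ x := by nlinarith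
    have hxb2 : x ≤ 3 := by nlinarith
    interval_cases x <;> interval_cases y <;> omega
  · -- n = 27
    exfalso; omega
  · -- n = 81
    rcases eq_or_ne y 0 with hy | hy
    · subst hy
      have hxx1 : x * x = 81 := by linarith [e3]
      have hxb1 : -9 ≤ x := by nlinarith
      have hxb2 : x ≤ 9 := by nlinarith
      interval_cases x <;> omega
    · exfalso
      have h9 : 9 ≤ y ∨ y ≤ -9 := by omega
      have hyy : 81 ≤ y * y := by rcases h9 with h | h <;> nlinarith
      have hxx : x * x ≤ 0 := by
        nlinarith [mul_nonneg (by linarith : (0:ℤ) ≤ D - 1) (mul_self_nonneg y)]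
      have hx0 : x = 0 := mul_self_eq_zero.mp (le_antisymm hxx (mul_self_nonneg x))
      rw [hx0] at e1
      omega

private lemma lemB (D n X Y U V : ℤ) (hD7 : 7 ≤ D) (hD4 : D % 4 = 3)
    (hn : n ∣ 81) (hnpos : 0 < n)
    (e1 : n * (4*U + 4) = (n + 9) * X) (e2 : 4 * n * V = (n - 9) * Y)
    (e3 : X*X + D*(Y*Y) = 4*n) (hXY : (X - Y) % 2 = 0) (hUV : (U - V) % 2 = 0) :
    V = 0 ∧ (U = 4 ∨ U = -6 ∨ U = -4 ∨ U = 2) := by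
  have hn81 : n ≤ 81 := Int.le_of_dvd (by norm_num) hn
  have hn5 : n = 1 ∨ n = 3 ∨ n = 9 ∨ n = 27 ∨ n = 81 := by
    interval_cases n <;> omega
  rcases hn5 with rfl | rfl | rfl | rfl | rfl
  · -- n = 1
    have hyy0 : Y * Y ≤ 0 := by
      nlinarith [mul_self_nonneg X, mul_nonneg (by linarith : (0:ℤ) ≤ D - 7) (mul_self_nonneg Y)]
    have hy : Y = 0 := mul_self_eq_zero.mp (le_antisymm hyy0 (mul_self_nonneg Y))
    subst hy
    have hxx1 : X * X = 4 := by linarith [e3]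
    have hxb1 : -2 ≤ X := by nlinarith
    have hxb2 : X ≤ 2 := by nlinarith
    interval_cases X <;> omega
  · -- n = 3
    exfalso
    have hyy : Y * Y ≤ 1 := by
      nlinarith [mul_self_nonneg X, mul_nonneg (by linarith : (0:ℤ) ≤ D - 7) (mul_self_nonneg Y)]
    have hyb1 : -1 ≤ Y := by nlinarith
    have hyb2 : Y ≤ 1 := by nlinarith
    have hy : Y = 0 := by omega
    subst hy
    have hxx1 : X * X = 12 := by linarith [e3]
    have hxb1 : -4 ≤ X := by nlinarith
    have hxb2 : X ≤ 4 := by nlinarith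
    interval_cases X <;> omega
  · -- n = 9
    have hyy : Y * Y ≤ 5 := by
      nlinarith [mul_self_nonneg X, mul_nonneg (by linarith : (0:ℤ) ≤ D - 7) (mul_self_nonneg Y)]
    have hxx : X * X ≤ 36 := by
      nlinarith [mul_nonneg (by linarith : (0:ℤ) ≤ D) (mul_self_nonneg Y)]
    have hyb1 : -2 ≤ Y := by nlinarith
    have hyb2 : Y ≤ 2 := by nlinarith
    have hxb1 : -6 ≤ X := by nlinarith
    have hxb2 : X ≤ 6 := by nlinarith
    interval_cases X <;> interval_cases Y <;> omega
  · -- n = 27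
    exfalso
    have hyy : Y * Y ≤ 15 := by
      nlinarith [mul_self_nonneg X, mul_nonneg (by linarith : (0:ℤ) ≤ D - 7) (mul_self_nonneg Y)]
    have hyb1 : -3 ≤ Y := by nlinarith
    have hyb2 : Y ≤ 3 := by nlinarith
    have hy : Y = 0 := by omega
    subst hy
    have hxx1 : X * X = 108 := by linarith [e3]
    have hxb1 : -10 ≤ X := by nlinarith
    have hxb2 : X ≤ 10 := by nlinarith
    interval_cases X <;> omega
  · -- n = 81
    rcases eq_or_ne Y 0 with hy | hy
    · subst hy
      have hxx1 : X * X = 324 := by linarith [e3]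
      have hxb1 : -18 ≤ X := by nlinarith
      have hxb2 : X ≤ 18 := by nlinarith
      interval_cases X <;> omega
    · exfalso
      have h9 : 9 ≤ Y ∨ Y ≤ -9 := by omega
      have hyy : 81 ≤ Y * Y := by rcases h9 with h | h <;> nlinarith
      have hxx : X * X ≤ 0 := by
        nlinarith [mul_nonneg (by linarith : (0:ℤ) ≤ D - 7) (mul_self_nonneg Y)]
      have hx0 : X = 0 := mul_self_eq_zero.mp (le_antisymm hxx (mul_self_nonneg X))
      rw [hx0] at e1
      omega

private lemma intMemRD (D : ℕ) (m : ℤ) : ((m : ℂ)) ∈ RD D :=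
  ⟨m, 0, by push_cast; ring⟩

theorem stmt_17 (D : ℕ) (hD : 0 < D) (hsf : Squarefree D)
    (hD2 : D ≠ 2) (hD3 : D ≠ 3) :
    {a : ℂ | a ∈ RD D ∧ a ≠ 1 ∧
        ∃ c ∈ RD D, (∃ n : ℤ, (‖c‖ : ℝ) ^ 2 = (n : ℝ) ∧ n ∣ 81) ∧
          a = (c ^ 2 - 2 * c + 9) / (4 * c)} = {-3, -2, 2} := by
  ext a
  simp only [Set.mem_setOf_eq, Set.mem_insert_iff, Set.mem_singleton_iff]
  constructor
  · rintro ⟨haRD, ha1, c, hcRD, ⟨n, hnorm, hdvd⟩, hane⟩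
    obtain ⟨p, q, ha⟩ := haRD
    obtain ⟨x, y, hc⟩ := hcRD
    set s := Real.sqrt D with hs_def
    have hsq : s ^ 2 = (D : ℝ) := Real.sq_sqrt (by positivity)
    have hs0 : s ≠ 0 := by
      rw [hs_def, Real.sqrt_ne_zero']; positivity
    -- positivity of n
    have hnpos : 0 < n := by
      have hn0 : 0 ≤ n := by
        have : (0:ℝ) ≤ (n:ℝ) := by rw [← hnorm]; positivity
        exact_mod_cast this
      have hn0' : n ≠ 0 := by
        rintro rfl
        rw [zero_dvd_iff] at hdvd
        norm_num at hdvd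
      omega
    have hc0 : c ≠ 0 := by
      intro h
      apply hnpos.ne'
      have : (n:ℝ) = 0 := by rw [← hnorm, h]; simp
      exact_mod_cast this
    have heq : 4*a*c = c^2 - 2*c + 9 := by
      rw [hane]; field_simp
    by_cases h4 : D % 4 = 3
    · -- half-integer case
      have hD7 : 7 ≤ (D:ℤ) := by omega
      have halpha : alphaD D = (1 + Complex.I * (s : ℂ)) / 2 := by rw [alphaD, if_pos h4]
      rw [halpha] at ha hc
      have hC : (2:ℂ)*c = ((2*x+y : ℤ):ℂ) + ((y:ℤ):ℂ) * (Complex.I * (s:ℂ)) := by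
        rw [hc]; push_cast; ring
      have hA : (2:ℂ)*a = ((2*p+q : ℤ):ℂ) + ((q:ℤ):ℂ) * (Complex.I * (s:ℂ)) := by
        rw [ha]; push_cast; ring
      have hCre : ((2:ℂ)*c).re = ((2*x+y : ℤ):ℝ) := by rw [hC]; simp
      have hCim : ((2:ℂ)*c).im = ((y:ℤ):ℝ) * s := by rw [hC]; simp [mul_comm]
      have hAre : ((2:ℂ)*a).re = ((2*p+q : ℤ):ℝ) := by rw [hA]; simp
      have hAim : ((2:ℂ)*a).im = ((q:ℤ):ℝ) * s := by rw [hA]; simp [mul_comm]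
      have habsC : ‖(2:ℂ)*c‖ ^ 2 = 4*(n:ℝ) := by
        rw [norm_mul, mul_pow, hnorm]
        norm_num
      have hnR : ((2*x+y:ℤ):ℝ)^2 + (((y:ℤ):ℝ)*s)^2 = 4*(n:ℝ) := by
        rw [← habsC, Complex.sq_norm, Complex.normSq_apply, hCre, hCim]; ring
      push_cast at hnR
      have e3 : (2*x+y)*(2*x+y) + (D:ℤ)*(y*y) = 4*n := by
        have : (((2*x+y)*(2*x+y) + (D:ℤ)*(y*y) : ℤ) : ℝ) = ((4*n : ℤ):ℝ) := by
          push_cast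
          linear_combination hnR - (y:ℝ)^2 * hsq
        exact_mod_cast this
      have hcc : ((2:ℂ)*c) * (starRingEnd ℂ) ((2:ℂ)*c) = 4*((n:ℝ) : ℂ) := by
        rw [Complex.mul_conj]
        have : Complex.normSq ((2:ℂ)*c) = 4*(n:ℝ) := by
          rw [← Complex.sq_norm]; exact habsC
        rw [this]; push_cast; ring
      have heqC : 4*(((2:ℂ)*a)*((2:ℂ)*c)) = ((2:ℂ)*c)^2 - 4*((2:ℂ)*c) + 36 := by
        linear_combination 4*heq
      have E : (4*((n:ℝ) : ℂ)) * (4*((2:ℂ)*a)+4)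
          = 4*((n:ℝ) : ℂ)*((2:ℂ)*c) + 36 * (starRingEnd ℂ) ((2:ℂ)*c) := by
        linear_combination (starRingEnd ℂ) ((2:ℂ)*c) * heqC + ((2:ℂ)*c - 4*((2:ℂ)*a) - 4) * hcc
      rw [Complex.ext_iff] at E
      obtain ⟨E1, E2⟩ := E
      simp [Complex.add_re, Complex.add_im, Complex.mul_re, Complex.mul_im,
        Complex.conj_re, Complex.conj_im, hAre, hAim, hCre, hCim] at E1 E2
      have hcre2 : 2 * c.re = 2*(x:ℝ)+(y:ℝ) := by
        have h := hCre
        simp [Complex.mul_re] at h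
        linarith
      have hcim2 : 2 * c.im = (y:ℝ) * s := by
        have h := hCim
        simp [Complex.mul_im] at h
        linarith
      have e1R : (n:ℝ)*(4*(2*(p:ℝ)+(q:ℝ))+4) = ((n:ℝ)+9)*(2*(x:ℝ)+(y:ℝ)) := by
        linear_combination E1 / 4 + 9 * hcre2
      have e2s : (4*(n:ℝ)*((q:ℤ):ℝ))*s = (((n:ℝ)-9)*((y:ℤ):ℝ))*s := by
        linear_combination E2 / 4 - 9 * hcim2
      have e2R : 4*(n:ℝ)*((q:ℤ):ℝ) = ((n:ℝ)-9)*((y:ℤ):ℝ) := mul_right_cancel₀ hs0 e2s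
      have e1 : n * (4*(2*p+q) + 4) = (n + 9) * (2*x+y) := by exact_mod_cast e1R
      have e2 : 4 * n * q = (n - 9) * y := by exact_mod_cast e2R
      obtain ⟨hq0, hU⟩ := lemB (D:ℤ) n (2*x+y) y (2*p+q) q hD7 (by omega) hdvd hnpos
        e1 e2 e3 (by omega) (by omega)
      have hp : p = 2 ∨ p = -3 ∨ p = -2 ∨ p = 1 := by omega
      subst hq0
      rcases hp with rfl | rfl | rfl | rfl
      · right; right; norm_num [ha]
      · left; norm_num [ha]
      · right; left; norm_num [ha]
      · exfalso; apply ha1; rw [ha]; norm_num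
    · -- integer case
      have hD1 : 1 ≤ (D:ℤ) := by omega
      have hD2' : (D:ℤ) ≠ 2 := by omega
      have hD8 : (D:ℤ) ≠ 8 := by
        intro h
        have : D = 8 := by omega
        rw [this] at hsf
        exact absurd hsf (by decide)
      have halpha : alphaD D = Complex.I * (s : ℂ) := by rw [alphaD, if_neg h4]
      rw [halpha] at ha hc
      have hcre : c.re = ((x:ℤ):ℝ) := by rw [hc]; simp
      have hcim : c.im = ((y:ℤ):ℝ) * s := by rw [hc]; simp [mul_comm]
      have hare : a.re = ((p:ℤ):ℝ) := by rw [ha]; simp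
      have haim : a.im = ((q:ℤ):ℝ) * s := by rw [ha]; simp [mul_comm]
      have hnR : ((x:ℤ):ℝ)^2 + (((y:ℤ):ℝ)*s)^2 = (n:ℝ) := by
        rw [← hnorm, Complex.sq_norm, Complex.normSq_apply, hcre, hcim]; ring
      have e3 : x*x + (D:ℤ)*(y*y) = n := by
        have : ((x*x + (D:ℤ)*(y*y) : ℤ) : ℝ) = (n:ℝ) := by
          push_cast
          linear_combination hnR - (y:ℝ)^2 * hsq
        exact_mod_cast this
      have hcc : c * (starRingEnd ℂ) c = ((n:ℝ) : ℂ) := by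
        rw [Complex.mul_conj]
        norm_cast
        rw [← Complex.sq_norm]
        exact_mod_cast hnorm
      have E : ((n:ℝ) : ℂ) * (4*a+2) = ((n:ℝ) : ℂ) * c + 9 * (starRingEnd ℂ) c := by
        linear_combination (starRingEnd ℂ) c * heq + (c - 4*a - 2) * hcc
      rw [Complex.ext_iff] at E
      obtain ⟨E1, E2⟩ := E
      simp [Complex.add_re, Complex.add_im, Complex.mul_re, Complex.mul_im,
        Complex.conj_re, Complex.conj_im, hare, haim, hcre, hcim] at E1 E2
      have e1R : (n:ℝ)*(4*((p:ℤ):ℝ)+2) = ((n:ℝ)+9)*((x:ℤ):ℝ) := by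
        linear_combination E1
      have e2s : (4*(n:ℝ)*((q:ℤ):ℝ))*s = (((n:ℝ)-9)*((y:ℤ):ℝ))*s := by
        linear_combination E2
      have e2R : 4*(n:ℝ)*((q:ℤ):ℝ) = ((n:ℝ)-9)*((y:ℤ):ℝ) := mul_right_cancel₀ hs0 e2s
      have e1 : n * (4*p + 2) = (n + 9) * x := by exact_mod_cast e1R
      have e2 : 4 * n * q = (n - 9) * y := by exact_mod_cast e2R
      obtain ⟨hq0, hp⟩ := lemA (D:ℤ) n x y p q hD1 hD2' hD8 hdvd hnpos e1 e2 e3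
      subst hq0
      rcases hp with rfl | rfl | rfl | rfl
      · right; right; norm_num [ha]
      · left; norm_num [ha]
      · right; left; norm_num [ha]
      · exfalso; apply ha1; rw [ha]; norm_num
  · rintro (rfl | rfl | rfl)
    · refine ⟨by simpa using intMemRD D (-3), by norm_num, (-1 : ℂ), by simpa using intMemRD D (-1),
        ⟨1, by norm_num, by norm_num⟩, by norm_num⟩
    · refine ⟨by simpa using intMemRD D (-2), by norm_num, (-3 : ℂ), by simpa using intMemRD D (-3),
        ⟨9, by norm_num, by norm_num⟩, by norm_num⟩
    · refine ⟨by simpa using intMemRD D 2, by norm_num, (1 : ℂ), by simpa using intMemRD D 1,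
        ⟨1, by norm_num, by norm_num⟩, by norm_num⟩
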